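/- Let G be a semiabelian p-group with d(G) = r. Then there is a chain of semiabelian subgroups {e} ≤ H_1 ≤ H_2 ≤ ... ≤ H_r = G with d(H_i) = i for each i. -/

import Mathlib

open scoped Pointwise

/-- The minimal family of finite p-groups containing the trivial group, closed under
semidirect products with abelian p-groups, and closed under quotients. -/
inductive IsSemiabelianP (p : ℕ) : ∀ (G : Type) [Group G], Prop where
  | triv : IsSemiabelianP p PUnit
  | sdp {A H : Type} [CommGroup A] [Group H] [Finite A] [Finite H]
      (hA : IsPGroup p A) (hH' : IsPGroup p H)
      (φ : H →* MulAut A) (hH : IsSemiabelianP p H) : IsSemiabelianP p (A ⋊[φ] H)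
  | quot {G₁ G₂ : Type} [Group G₁] [Group G₂] [Finite G₁] (f : G₁ →* G₂)
      (hf : Function.Surjective f) (hG : IsSemiabelianP p G₁) : IsSemiabelianP p G₂

namespace SemiabAux


/-- Equiv of a semidirect product with the product type. -/
def sdpEquivProd {N G : Type} [Group N] [Group G] (φ : G →* MulAut N) :
    (N ⋊[φ] G) ≃ N × G where
  toFun x := (x.left, x.right)
  invFun x := ⟨x.1, x.2⟩
  left_inv _ := rfl
  right_inv _ := rfl

instance instFiniteSdp {N G : Type} [Group N] [Group G] [Finite N] [Finite G]
    {φ : G →* MulAut N} : Finite (N ⋊[φ] G) :=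
  Finite.of_equiv (N × G) (sdpEquivProd φ).symm

variable {p : ℕ}

lemma semiab_of_subsingleton (p : ℕ) (G : Type) [Group G] [Subsingleton G] :
    IsSemiabelianP p G :=
  IsSemiabelianP.quot (1 : PUnit →* G) (fun y => ⟨1, Subsingleton.elim _ _⟩)
    IsSemiabelianP.triv

lemma semiab_of_equiv {G₁ G₂ : Type} [Group G₁] [Group G₂] [Finite G₁]
    (e : G₁ ≃* G₂) (h : IsSemiabelianP p G₁) : IsSemiabelianP p G₂ :=
  IsSemiabelianP.quot e.toMonoidHom e.surjective h

lemma pgroup_of_semiab [Fact p.Prime] {G : Type} [Group G] (h : IsSemiabelianP p G) :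
    IsPGroup p G := by
  induction h with
  | triv => exact fun g => ⟨0, Subsingleton.elim _ _⟩
  | @sdp A H _ _ _ _ hA hH' φ hH ih =>
      rw [IsPGroup.iff_card]
      obtain ⟨a, ha⟩ := IsPGroup.iff_card.1 hA
      obtain ⟨b, hb⟩ := IsPGroup.iff_card.1 hH'
      exact ⟨a + b, by rw [Nat.card_congr (sdpEquivProd φ), Nat.card_prod, ha, hb, pow_add]⟩
  | quot f hf _ ih => exact ih.of_surjective f hf


lemma decomp {G : Type} [Group G] (h : IsSemiabelianP p G) :
    ∀ {G₂ : Type} [Group G₂] (f : G →* G₂), Function.Surjective f →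
      Subsingleton G₂ ∨ ∃ (A U : Subgroup G₂), A.Normal ∧
        (∀ x ∈ A, ∀ y ∈ A, x * y = y * x) ∧
        IsSemiabelianP p ↥U ∧ U ≠ ⊤ ∧ A ⊔ U = ⊤ := by
  induction h with
  | triv =>
      intro G₂ _ f hf
      exact Or.inl ⟨fun a b => by
        obtain ⟨x, rfl⟩ := hf a; obtain ⟨y, rfl⟩ := hf b
        rw [Subsingleton.elim x y]⟩
  | @sdp A H _ _ _ _ hA hH' φ hH ih =>
      intro G₂ _ f hf
      by_cases hU : (f.comp SemidirectProduct.inr).range = ⊤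
      · exact ih (f.comp SemidirectProduct.inr) (MonoidHom.range_eq_top.1 hU)
      · right
        refine ⟨(f.comp SemidirectProduct.inl).range, (f.comp SemidirectProduct.inr).range,
          ?_, ?_, ?_, hU, ?_⟩
        · rw [MonoidHom.range_comp]
          haveI : (SemidirectProduct.inl.range : Subgroup (A ⋊[φ] H)).Normal := by
            rw [SemidirectProduct.range_inl_eq_ker_rightHom]; infer_instance
          exact this.map f hf
        · rintro x ⟨a, rfl⟩ y ⟨b, rfl⟩
          rw [← map_mul, ← map_mul, mul_comm]
        · exact IsSemiabelianP.quot (f.comp SemidirectProduct.inr).rangeRestrict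
            (f.comp SemidirectProduct.inr).rangeRestrict_surjective hH
        · have htop : (SemidirectProduct.inl.range : Subgroup (A ⋊[φ] H)) ⊔
              SemidirectProduct.inr.range = ⊤ := by
            rw [eq_top_iff]
            intro x _
            rw [← SemidirectProduct.inl_left_mul_inr_right x]
            exact mul_mem (Subgroup.mem_sup_left ⟨x.left, rfl⟩)
              (Subgroup.mem_sup_right ⟨x.right, rfl⟩)
          rw [MonoidHom.range_comp, MonoidHom.range_comp, ← Subgroup.map_sup, htop,
            Subgroup.map_top_of_surjective f hf]
  | quot g hg _ ih =>
      intro G₂ _ f hf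
      exact ih (f.comp g) (hf.comp hg)


lemma rank_zero_of_subsingleton (G : Type) [Group G] [Finite G] [Subsingleton G] :
    Group.rank G = 0 := by
  have hbt : (⊥ : Subgroup G) = ⊤ :=
    Subgroup.ext fun x => by simp [Subgroup.mem_bot, Subsingleton.elim x 1]
  have : Group.rank G ≤ (∅ : Finset G).card :=
    Group.rank_le (by rw [Finset.coe_empty, Subgroup.closure_empty, hbt])
  simpa using this

lemma subsingleton_of_rank_zero {G : Type} [Group G] [Finite G]
    (h : Group.rank G = 0) : Subsingleton G := by
  obtain ⟨S, hc, hcl⟩ := Group.rank_spec G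
  rw [h, Finset.card_eq_zero] at hc
  subst hc
  rw [Finset.coe_empty, Subgroup.closure_empty] at hcl
  have h1 : ∀ x : G, x = 1 := fun x => Subgroup.mem_bot.1 (hcl ▸ Subgroup.mem_top x)
  exact ⟨fun a b => (h1 a).trans (h1 b).symm⟩

lemma card_lt_of_ne_top {G : Type} [Group G] [Finite G] {X : Subgroup G} (h : X ≠ ⊤) :
    Nat.card ↥X < Nat.card G := by
  have h1 : (X : Set G) ⊂ Set.univ :=
    Set.ssubset_univ_iff.2 (fun hh => h (Subgroup.coe_eq_univ.1 hh))
  have h2 := Set.ncard_lt_ncard h1 Set.finite_univ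
  rw [Set.ncard_univ] at h2
  have h3 : Nat.card ↥X = (X : Set G).ncard := Nat.card_coe_set_eq _
  omega

lemma rank_map_subtype {G : Type} [Group G] [Finite G] (K : Subgroup G) (S : Subgroup ↥K) :
    Group.rank ↥(S.map K.subtype) = Group.rank ↥S :=
  (Group.rank_congr (S.equivMapOfInjective K.subtype K.subtype_injective)).symm

lemma rank_sup_closure_le {G : Type} [Group G] [Finite G] (K : Subgroup G) (a : G) :
    Group.rank ↥(K ⊔ Subgroup.closure {a}) ≤ Group.rank ↥K + 1 := by
  classical
  obtain ⟨S, hScard, hScl⟩ := Group.rank_spec ↥K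
  have h1 : Subgroup.closure ((S.image K.subtype : Finset G) : Set G) = K := by
    rw [Finset.coe_image, ← MonoidHom.map_closure, hScl, ← MonoidHom.range_eq_map,
      Subgroup.range_subtype]
  have h2 : K ⊔ Subgroup.closure {a}
      = Subgroup.closure ((insert a (S.image K.subtype) : Finset G) : Set G) := by
    rw [Finset.coe_insert, Set.insert_eq, Subgroup.closure_union, h1, sup_comm]
  rw [Subgroup.rank_congr h2]
  refine le_trans (Subgroup.rank_closure_finset_le_card _) ?_
  refine le_trans (Finset.card_insert_le _ _) ?_
  exact Nat.succ_le_succ (le_trans Finset.card_image_le (le_of_eq hScard))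

lemma semiab_normal_sup [Fact p.Prime] {G : Type} [Group G] [Finite G]
    (hpG : IsPGroup p G) (N U : Subgroup G) [hN : N.Normal]
    (hNc : ∀ x ∈ N, ∀ y ∈ N, x * y = y * x) (hU : IsSemiabelianP p ↥U) :
    IsSemiabelianP p ↥(N ⊔ U) := by
  letI : CommGroup ↥N :=
    { (inferInstance : Group ↥N) with
      mul_comm := fun a b => Subtype.ext (hNc a a.2 b b.2) }
  let φ : ↥U →* MulAut ↥N := MulAut.conjNormal.comp U.subtype
  have compat : ∀ u : ↥U, N.subtype.comp (φ u).toMonoidHom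
      = (MulAut.conj (U.subtype u)).toMonoidHom.comp N.subtype := by
    intro u
    ext n
    simp [φ, MulAut.conj_apply]
  let m : (↥N ⋊[φ] ↥U) →* G := SemidirectProduct.lift N.subtype U.subtype compat
  have hmval : ∀ x : ↥N ⋊[φ] ↥U, m x = (x.left : G) * (x.right : G) := fun _ => rfl
  have hm : ∀ x : ↥N ⋊[φ] ↥U, m x ∈ N ⊔ U := by
    intro x
    rw [hmval]
    exact mul_mem (Subgroup.mem_sup_left x.left.2) (Subgroup.mem_sup_right x.right.2)
  let m' : (↥N ⋊[φ] ↥U) →* ↥(N ⊔ U) := m.codRestrict _ hm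
  have hsurj : Function.Surjective m' := by
    intro y
    have hy : (y : G) ∈ ((N : Set G) * (U : Set G)) := by
      rw [← Subgroup.normal_mul]
      exact y.2
    obtain ⟨a, ha, b, hb, hab⟩ := hy
    refine ⟨⟨⟨a, ha⟩, ⟨b, hb⟩⟩, Subtype.ext ?_⟩
    show m _ = (y : G)
    rw [hmval]
    exact hab
  exact IsSemiabelianP.quot m' hsurj
    (IsSemiabelianP.sdp (hpG.to_subgroup N) (hpG.to_subgroup U) φ hU)


lemma step_eq {G : Type} [Group G] (A U : Subgroup G) [hAn : A.Normal]
    (hAc : ∀ x ∈ A, ∀ y ∈ A, x * y = y * x) (hAU : A ⊔ U = ⊤)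
    (s : Set G) (a : G) (ha : a ∈ A) :
    Subgroup.normalClosure (insert a s) ⊔ U
      = (Subgroup.normalClosure s ⊔ U) ⊔ Subgroup.closure {a} := by
  apply le_antisymm
  · refine sup_le ?_ (le_sup_of_le_left le_sup_right)
    show Subgroup.closure (Group.conjugatesOfSet (insert a s)) ≤ _
    rw [Subgroup.closure_le]
    intro x hx
    rcases Group.mem_conjugatesOfSet_iff.1 hx with ⟨b, hb, hconj⟩
    rcases isConj_iff.1 hconj with ⟨c, rfl⟩
    rcases hb with rfl | hbs
    · -- b = a
      have hc : c ∈ ((A : Set G) * (U : Set G)) := by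
        rw [← Subgroup.normal_mul, hAU]
        exact Set.mem_univ c
      obtain ⟨x₀, hx₀, u, hu, rfl⟩ := hc
      have hA1 : u * b * u⁻¹ ∈ A := hAn.conj_mem b ha u
      have key : x₀ * (u * b * u⁻¹) * x₀⁻¹ = u * b * u⁻¹ := by
        rw [hAc x₀ hx₀ _ hA1, mul_assoc, mul_inv_cancel, mul_one]
      have heq : (x₀ * u) * b * (x₀ * u)⁻¹ = u * b * u⁻¹ := by
        rw [mul_inv_rev, show x₀ * u * b * (u⁻¹ * x₀⁻¹) = x₀ * (u * b * u⁻¹) * x₀⁻¹ by group,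
          key]
      rw [heq]
      refine mul_mem (mul_mem ?_ ?_) ?_
      · exact Subgroup.mem_sup_left (Subgroup.mem_sup_right hu)
      · exact Subgroup.mem_sup_right (Subgroup.subset_closure rfl)
      · exact inv_mem (Subgroup.mem_sup_left (Subgroup.mem_sup_right hu))
    · exact Subgroup.mem_sup_left (Subgroup.mem_sup_left
        ((Subgroup.normalClosure_normal).conj_mem b (Subgroup.subset_normalClosure hbs) c))
  · refine sup_le (sup_le ?_ le_sup_right) ?_
    · exact le_sup_of_le_left (Subgroup.normalClosure_mono (Set.subset_insert a s))
    · rw [Subgroup.closure_le]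
      rintro x rfl
      exact Subgroup.mem_sup_left (Subgroup.subset_normalClosure (Set.mem_insert _ _))


lemma walk [Fact p.Prime] {G : Type} [Group G] [Finite G]
    (hpG : IsPGroup p G) (A U : Subgroup G) (hAn : A.Normal)
    (hAc : ∀ x ∈ A, ∀ y ∈ A, x * y = y * x) (hU : IsSemiabelianP p ↥U)
    (hAU : A ⊔ U = ⊤) {s : ℕ} (hr : Group.rank G = s + 1)
    (hUr : Group.rank ↥U ≤ s) :
    ∃ X : Subgroup G, X ≠ ⊤ ∧ IsSemiabelianP p ↥X ∧ Group.rank ↥X = s := by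
  classical
  haveI := hAn
  have hAfin : (A : Set G).Finite := Set.toFinite _
  set l : List G := hAfin.toFinset.toList with hl_def
  have hel : ∀ x, x ∈ l ↔ x ∈ A := by
    intro x
    rw [hl_def, Finset.mem_toList, Set.Finite.mem_toFinset]
    rfl
  set q := l.length with hq_def
  set e : ℕ → G := fun i => l.getD i 1 with he_def
  have he : ∀ i, e i ∈ A := by
    intro i
    by_cases hi : i < q
    · rw [he_def]
      simp only []
      rw [List.getD_eq_getElem l 1 hi]
      exact (hel _).1 (List.getElem_mem hi)
    · rw [he_def]
      simp only []
      rw [List.getD_eq_default l 1 (le_of_not_gt hi)]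
      exact one_mem A
  set S : ℕ → Set G := fun j => {x | ∃ i, i < j ∧ e i = x} with hS_def
  set K : ℕ → Subgroup G := fun j => Subgroup.normalClosure (S j) ⊔ U with hK_def
  have hSsub : ∀ j, S j ⊆ A := by
    rintro j x ⟨i, _, rfl⟩
    exact he i
  have hKsa : ∀ j, IsSemiabelianP p ↥(K j) := by
    intro j
    have hle : Subgroup.normalClosure (S j) ≤ A :=
      Subgroup.normalClosure_le_normal (hSsub j)
    exact semiab_normal_sup hpG _ U
      (fun x hx y hy => hAc x (hle hx) y (hle hy)) hU
  have hK0 : K 0 = U := by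
    have hS0 : S 0 = ∅ := Set.eq_empty_of_forall_notMem (by rintro x ⟨i, hi, _⟩; omega)
    have : Subgroup.normalClosure (S 0) ≤ ⊥ :=
      Subgroup.normalClosure_le_normal (by rw [hS0]; exact Set.empty_subset _)
    rw [hK_def]
    simp only []
    rw [le_bot_iff.1 this, bot_sup_eq]
  have hKq : K q = ⊤ := by
    rw [eq_top_iff, ← hAU]
    refine sup_le ?_ le_sup_right
    intro x hx
    refine Subgroup.mem_sup_left (Subgroup.subset_normalClosure ?_)
    obtain ⟨i, hi, hx'⟩ := List.mem_iff_getElem.1 ((hel x).2 hx)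
    exact ⟨i, hi, by rw [he_def]; simp only []; rw [List.getD_eq_getElem l 1 hi]; exact hx'⟩
  have hstep : ∀ j, j < q → Group.rank ↥(K (j + 1)) ≤ Group.rank ↥(K j) + 1 := by
    intro j hj
    have hS' : S (j + 1) = insert (e j) (S j) := by
      ext x
      constructor
      · rintro ⟨i, hi, rfl⟩
        rcases Nat.lt_succ_iff_lt_or_eq.1 hi with h | h
        · exact Set.mem_insert_of_mem _ ⟨i, h, rfl⟩
        · subst h; exact Set.mem_insert _ _
      · rintro (rfl | ⟨i, hi, rfl⟩)
        · exact ⟨j, Nat.lt_succ_self j, rfl⟩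
        · exact ⟨i, hi.trans (Nat.lt_succ_self j), rfl⟩
    have heq : K (j + 1) = K j ⊔ Subgroup.closure {e j} := by
      rw [hK_def]
      simp only []
      rw [hS', step_eq A U hAc hAU (S j) (e j) (he j)]
    rw [Subgroup.rank_congr heq]
    exact rank_sup_closure_le _ _
  have hd0 : Group.rank ↥(K 0) ≤ s := by rw [Subgroup.rank_congr hK0]; exact hUr
  have hdq : Group.rank ↥(K q) = s + 1 := by
    rw [Subgroup.rank_congr hKq, ← hr]
    exact Group.rank_congr Subgroup.topEquiv
  have hex : ∃ j, s < Group.rank ↥(K j) := ⟨q, by omega⟩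
  have hm := Nat.find_spec hex
  have hm0 : Nat.find hex ≠ 0 := by
    intro h
    rw [h] at hm
    omega
  obtain ⟨m', hm'⟩ : ∃ m'', Nat.find hex = m'' + 1 := ⟨Nat.find hex - 1, by omega⟩
  rw [hm'] at hm
  have hmlt : Group.rank ↥(K m') ≤ s := by
    have := Nat.find_min hex (m := m') (by omega)
    omega
  have hmq : m' + 1 ≤ q := by
    rw [← hm']
    exact Nat.find_le (by omega)
  have hs' := hstep m' (by omega)
  have hrank : Group.rank ↥(K m') = s := by omega
  refine ⟨K m', ?_, hKsa m', hrank⟩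
  intro h
  rw [Subgroup.rank_congr h, show Group.rank ↥(⊤ : Subgroup G) = Group.rank G from
    Group.rank_congr Subgroup.topEquiv, hr] at hrank
  omega


lemma main (p : ℕ) [Fact p.Prime] : ∀ (n : ℕ) (G : Type) [Group G] [Finite G],
    Nat.card G ≤ n → IsSemiabelianP p G → ∀ (r : ℕ), Group.rank G = r →
    ∃ H : Fin (r + 1) → Subgroup G,
      Monotone H ∧ H 0 = ⊥ ∧ H (Fin.last r) = ⊤ ∧
      (∀ i, IsSemiabelianP p ↥(H i)) ∧
      ∀ i : Fin (r + 1), Group.rank ↥(H i) = (i : ℕ) := by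
  intro n
  induction n with
  | zero =>
      intro G _ _ hcard
      have := Nat.card_pos (α := G)
      omega
  | succ n ih =>
      intro G _ _ hcard hG r hr
      cases r with
      | zero =>
          haveI : Subsingleton G := subsingleton_of_rank_zero hr
          have hbt : (⊥ : Subgroup G) = ⊤ :=
            Subgroup.ext fun x => by simp [Subgroup.mem_bot, Subsingleton.elim x 1]
          haveI : Subsingleton ↥(⊥ : Subgroup G) :=
            ⟨fun a b => Subtype.ext ((Subgroup.mem_bot.1 a.2).trans (Subgroup.mem_bot.1 b.2).symm)⟩
          refine ⟨fun _ => ⊥, monotone_const, rfl, hbt, fun _ => semiab_of_subsingleton p _, ?_⟩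
          intro i
          have hi := i.isLt
          have : (i : ℕ) = 0 := by omega
          rw [this]
          exact rank_zero_of_subsingleton _
      | succ s =>
          have hkey : ∃ X : Subgroup G, X ≠ ⊤ ∧ IsSemiabelianP p ↥X ∧ Group.rank ↥X = s := by
            have hns : ¬ Subsingleton G := by
              intro h
              rw [rank_zero_of_subsingleton G] at hr
              omega
            rcases decomp hG (MonoidHom.id G) Function.surjective_id with
              h | ⟨A, U, hAn, hAc, hUsa, hUne, hAU⟩
            · exact absurd h hns
            by_cases hUr : Group.rank ↥U ≤ s
            · exact walk (pgroup_of_semiab hG) A U hAn hAc hUsa hAU hr hUr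
            · have hcardU : Nat.card ↥U ≤ n := by
                have := card_lt_of_ne_top hUne
                omega
              obtain ⟨C, _, _, _, hCsa, hCrank⟩ := ih ↥U hcardU hUsa (Group.rank ↥U) rfl
              have hst : s < Group.rank ↥U + 1 := by omega
              refine ⟨(C ⟨s, hst⟩).map U.subtype, ?_, ?_, ?_⟩
              · intro h
                have h2 : Group.rank ↥((C ⟨s, hst⟩).map U.subtype) = Group.rank G := by
                  rw [h]
                  exact Group.rank_congr Subgroup.topEquiv
                rw [rank_map_subtype, hCrank ⟨s, hst⟩, hr] at h2
                simp at h2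
              · exact semiab_of_equiv
                  (Subgroup.equivMapOfInjective _ _ U.subtype_injective) (hCsa _)
              · rw [rank_map_subtype, hCrank ⟨s, hst⟩]
          obtain ⟨X, hXne, hXsa, hXr⟩ := hkey
          have hcardX : Nat.card ↥X ≤ n := by
            have := card_lt_of_ne_top hXne
            omega
          obtain ⟨C, hCmono, hC0, hClast, hCsa, hCrank⟩ := ih ↥X hcardX hXsa s hXr
          refine ⟨fun i => if h : (i : ℕ) ≤ s then (C ⟨i, by omega⟩).map X.subtype else ⊤,
            ?_, ?_, ?_, ?_, ?_⟩
          · intro i j hij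
            have hij' : (i : ℕ) ≤ (j : ℕ) := hij
            dsimp only
            by_cases hj : (j : ℕ) ≤ s
            · have hi : (i : ℕ) ≤ s := le_trans hij' hj
              rw [dif_pos hi, dif_pos hj]
              exact Subgroup.map_mono (hCmono (show (⟨(i : ℕ), by omega⟩ : Fin (s + 1)) ≤
                ⟨(j : ℕ), by omega⟩ from hij'))
            · rw [dif_neg hj]
              exact le_top
          · show (if h : ((0 : Fin (s + 2)) : ℕ) ≤ s then _ else ⊤) = ⊥
            rw [dif_pos (by simp : ((0 : Fin (s + 2)) : ℕ) ≤ s)]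
            have h0 : (⟨((0 : Fin (s + 2)) : ℕ), by simp⟩ : Fin (s + 1)) = 0 := by
              apply Fin.ext
              simp
            rw [h0, hC0, Subgroup.map_bot]
          · show (if h : ((Fin.last (s + 1)) : ℕ) ≤ s then _ else ⊤) = ⊤
            rw [dif_neg (by simp [Fin.val_last])]
          · intro i
            dsimp only
            by_cases hi : (i : ℕ) ≤ s
            · show IsSemiabelianP p ↥(if h : (i : ℕ) ≤ s then (C ⟨i, by omega⟩).map X.subtype else ⊤)
              rw [dif_pos hi]
              exact semiab_of_equiv
                (Subgroup.equivMapOfInjective _ _ X.subtype_injective) (hCsa _)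
            · show IsSemiabelianP p ↥(if h : (i : ℕ) ≤ s then (C ⟨i, by omega⟩).map X.subtype else ⊤)
              rw [dif_neg hi]
              exact semiab_of_equiv Subgroup.topEquiv.symm hG
          · intro i
            dsimp only
            by_cases hi : (i : ℕ) ≤ s
            · show Group.rank ↥(if h : (i : ℕ) ≤ s then (C ⟨i, by omega⟩).map X.subtype else ⊤) = (i : ℕ)
              rw [dif_pos hi, rank_map_subtype, hCrank ⟨i, by omega⟩]
            · show Group.rank ↥(if h : (i : ℕ) ≤ s then (C ⟨i, by omega⟩).map X.subtype else ⊤) = (i : ℕ)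
              rw [dif_neg hi]
              have hi2 : (i : ℕ) = s + 1 := by
                have := i.isLt
                omega
              rw [hi2, ← hr]
              exact (Group.rank_congr Subgroup.topEquiv)


end SemiabAux

/-- A semiabelian `p`-group of rank `r` has a chain of semiabelian subgroups
`{e} ≤ H₁ ≤ ⋯ ≤ H_r = G` with `d(H_i) = i`. -/
theorem exists_chain_of_semiabelian_subgroups (p : ℕ) [Fact p.Prime] (G : Type)
    [Group G] [Finite G] (hG : IsSemiabelianP p G) (r : ℕ) (hr : Group.rank G = r) :
    ∃ H : Fin (r + 1) → Subgroup G,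
      Monotone H ∧ H 0 = ⊥ ∧ H (Fin.last r) = ⊤ ∧
      (∀ i, IsSemiabelianP p ↥(H i)) ∧
      ∀ i : Fin (r + 1), Group.rank ↥(H i) = (i : ℕ) := by
  exact SemiabAux.main p (Nat.card G) G le_rfl hG r hr
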